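/- Let f : I → (0,∞) be a differentiable positive function on an open interval I ⊆ (0,∞). Then f is geometrically convex on I if and only if the function x ↦ x·f'(x)/f(x) is monotone increasing on I. -/

import Mathlib

open Real Set

theorem geom_convex_iff_mono (a b : ℝ) (ha : 0 ≤ a) (f : ℝ → ℝ)
    (hpos : ∀ x ∈ Set.Ioo a b, 0 < f x)
    (hdiff : ∀ x ∈ Set.Ioo a b, DifferentiableAt ℝ f x) :
    (∀ x ∈ Set.Ioo a b, ∀ y ∈ Set.Ioo a b, ∀ l ∈ Set.Icc (0:ℝ) 1,
        f (x ^ l * y ^ (1 - l)) ≤ f x ^ l * f y ^ (1 - l))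
      ↔ MonotoneOn (fun x => x * deriv f x / f x) (Set.Ioo a b) := by
  set s : Set ℝ := Real.exp ⁻¹' Set.Ioo a b with hs
  set g : ℝ → ℝ := fun t => Real.log (f (Real.exp t)) with hg
  have hxpos : ∀ x ∈ Set.Ioo a b, (0:ℝ) < x := fun x hx => lt_of_le_of_lt ha hx.1
  have hmem : ∀ x ∈ Set.Ioo a b, Real.log x ∈ s := by
    intro x hx
    simp only [hs, Set.mem_preimage, Real.exp_log (hxpos x hx)]
    exact hx
  have hsopen : IsOpen s := isOpen_Ioo.preimage Real.continuous_exp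
  have hconv : Convex ℝ s := by
    rw [convex_iff_ordConnected]
    constructor
    intro t1 h1 t2 h2 t ht
    exact ⟨h1.1.trans_le (Real.exp_le_exp.2 ht.1),
      lt_of_le_of_lt (Real.exp_le_exp.2 ht.2) h2.2⟩
  have hgderiv : ∀ t ∈ s,
      HasDerivAt g (Real.exp t * deriv f (Real.exp t) / f (Real.exp t)) t := by
    intro t ht
    have h1 : HasDerivAt (fun u => f (Real.exp u)) (deriv f (Real.exp t) * Real.exp t) t :=
      ((hdiff _ ht).hasDerivAt).comp t (Real.hasDerivAt_exp t)
    have h2 := (Real.hasDerivAt_log (hpos _ ht).ne').comp t h1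
    exact h2.congr_deriv (by ring)
  have hderiv_eq : ∀ t ∈ s, deriv g t = Real.exp t * deriv f (Real.exp t) / f (Real.exp t) :=
    fun t ht => (hgderiv t ht).deriv
  constructor
  · -- geometric convexity → monotone
    intro h
    have hgc : ConvexOn ℝ s g := by
      refine ⟨hconv, ?_⟩
      intro t1 h1 t2 h2 p q hp hq hpq
      have hl : p ∈ Set.Icc (0:ℝ) 1 := ⟨hp, by linarith⟩
      have key := h _ h1 _ h2 p hl
      have h1q : 1 - p = q := by linarith
      rw [h1q] at key
      have e1 : (Real.exp t1) ^ p = Real.exp (p * t1) := by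
        rw [Real.rpow_def_of_pos (Real.exp_pos _), Real.log_exp, mul_comm]
      have e2 : (Real.exp t2) ^ q = Real.exp (q * t2) := by
        rw [Real.rpow_def_of_pos (Real.exp_pos _), Real.log_exp, mul_comm]
      rw [e1, e2, ← Real.exp_add] at key
      have hptmem : p * t1 + q * t2 ∈ s := by
        have := hconv h1 h2 hp hq hpq
        simpa [smul_eq_mul] using this
      have hfpt : 0 < f (Real.exp (p * t1 + q * t2)) := hpos _ hptmem
      have hf1 : 0 < f (Real.exp t1) := hpos _ h1
      have hf2 : 0 < f (Real.exp t2) := hpos _ h2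
      have hRHS : 0 < f (Real.exp t1) ^ p * f (Real.exp t2) ^ q := by positivity
      calc g (p • t1 + q • t2)
          = Real.log (f (Real.exp (p * t1 + q * t2))) := by
            simp [hg, smul_eq_mul]
        _ ≤ Real.log (f (Real.exp t1) ^ p * f (Real.exp t2) ^ q) :=
            (Real.log_le_log_iff hfpt hRHS).2 key
        _ = p • g t1 + q • g t2 := by
            rw [Real.log_mul (by positivity) (by positivity),
              Real.log_rpow hf1, Real.log_rpow hf2]
            simp [hg, smul_eq_mul]
    have hmono := hgc.monotoneOn_deriv (fun t ht => (hgderiv t ht).differentiableAt)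
    intro x hx y hy hxy
    have hlog : Real.log x ≤ Real.log y :=
      Real.log_le_log (hxpos x hx) hxy
    have := hmono (hmem x hx) (hmem y hy) hlog
    rw [hderiv_eq _ (hmem x hx), hderiv_eq _ (hmem y hy),
      Real.exp_log (hxpos x hx), Real.exp_log (hxpos y hy)] at this
    exact this
  · -- monotone → geometric convexity
    intro h
    have hgc : ConvexOn ℝ s g := by
      apply MonotoneOn.convexOn_of_deriv hconv
      · exact fun t ht => ((hgderiv t ht).differentiableAt).continuousAt.continuousWithinAt
      · rw [hsopen.interior_eq]
        exact fun t ht => ((hgderiv t ht).differentiableAt).differentiableWithinAt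
      · rw [hsopen.interior_eq]
        intro t1 h1 t2 h2 hle
        rw [hderiv_eq _ h1, hderiv_eq _ h2]
        exact h h1 h2 (Real.exp_le_exp.2 hle)
    intro x hx y hy l hl
    have hx0 := hxpos x hx
    have hy0 := hxpos y hy
    have hl2 : (0:ℝ) ≤ 1 - l := by linarith [hl.2]
    have hcomb := hgc.2 (hmem x hx) (hmem y hy) hl.1 hl2 (by ring)
    have hptmem : l * Real.log x + (1 - l) * Real.log y ∈ s := by
      have := hconv (hmem x hx) (hmem y hy) hl.1 hl2 (by ring)
      simpa [smul_eq_mul] using this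
    have e : x ^ l * y ^ (1 - l) = Real.exp (l * Real.log x + (1 - l) * Real.log y) := by
      rw [Real.rpow_def_of_pos hx0, Real.rpow_def_of_pos hy0, ← Real.exp_add,
        mul_comm (Real.log x) l, mul_comm (Real.log y) (1 - l)]
    have hfpt : 0 < f (x ^ l * y ^ (1 - l)) := by rw [e]; exact hpos _ hptmem
    have hfx : 0 < f x := hpos x hx
    have hfy : 0 < f y := hpos y hy
    have hRHS : 0 < f x ^ l * f y ^ (1 - l) := by positivity
    rw [← Real.log_le_log_iff hfpt hRHS]
    have lhs_eq : Real.log (f (x ^ l * y ^ (1 - l))) = g (l • Real.log x + (1 - l) • Real.log y) := by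
      simp [hg, smul_eq_mul, e]
    have rhs_eq : Real.log (f x ^ l * f y ^ (1 - l)) = l • g (Real.log x) + (1 - l) • g (Real.log y) := by
      rw [Real.log_mul (by positivity) (by positivity),
        Real.log_rpow hfx, Real.log_rpow hfy]
      simp [hg, smul_eq_mul, Real.exp_log hx0, Real.exp_log hy0]
    rw [lhs_eq, rhs_eq]
    exact hcomb
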